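/- Under the hypotheses of the augmented triple complex lemma (exact rows in the δ₁-direction), the augmentation map f* : Tot(V) → Tot(K) is a quasi-isomorphism of total complexes. -/

import Mathlib

section

variable {K : ℕ → ℕ → ℕ → Type*} [∀ r p q, AddCommGroup (K r p q)]
variable {V : ℕ → ℕ → Type*} [∀ p q, AddCommGroup (V p q)]

/-- The `δ₁`-contribution `δ₁(c_{r−1,p,q})` to the total differential of the
triple complex. -/
def tot3A (δ₁ : ∀ r p q, K r p q →+ K (r + 1) p q) (c : ∀ r p q, K r p q) :
    ∀ r p q, K r p q
  | 0, _, _ => 0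
  | (r + 1), p, q => δ₁ r p q (c r p q)

/-- The `δ₂`-contribution `δ₂(c_{r,p−1,q})` to the total differential. -/
def tot3B (δ₂ : ∀ r p q, K r p q →+ K r (p + 1) q) (c : ∀ r p q, K r p q) :
    ∀ r p q, K r p q
  | _, 0, _ => 0
  | r, (p + 1), q => δ₂ r p q (c r p q)

/-- The `d`-contribution `d(c_{r,p,q−1})` to the total differential. -/
def tot3C (d : ∀ r p q, K r p q →+ K r p (q + 1)) (c : ∀ r p q, K r p q) :
    ∀ r p q, K r p q
  | _, _, 0 => 0
  | r, p, (q + 1) => d r p q (c r p q)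

/-- The total differential `D = δ₁ + (−1)^r δ₂ + (−1)^{r+p} d` of a first-octant
triple complex. -/
def totD3 (δ₁ : ∀ r p q, K r p q →+ K (r + 1) p q)
    (δ₂ : ∀ r p q, K r p q →+ K r (p + 1) q)
    (d : ∀ r p q, K r p q →+ K r p (q + 1))
    (c : ∀ r p q, K r p q) (r p q : ℕ) : K r p q :=
  tot3A δ₁ c r p q + ((-1 : ℤ) ^ r) • tot3B δ₂ c r p q
    + ((-1 : ℤ) ^ (r + p)) • tot3C d c r p q

/-- The horizontal (`δ₂`-direction) contribution to the total differential of the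
augmentation double complex `V^{p,q}`. -/
def tot2A (δ₂V : ∀ p q, V p q →+ V (p + 1) q) (ω : ∀ p q, V p q) :
    ∀ p q, V p q
  | 0, _ => 0
  | (p + 1), q => δ₂V p q (ω p q)

/-- The vertical (`d`-direction) contribution to the total differential of the
augmentation double complex. -/
def tot2B (dV : ∀ p q, V p q →+ V p (q + 1)) (ω : ∀ p q, V p q) :
    ∀ p q, V p q
  | _, 0 => 0
  | p, (q + 1) => dV p q (ω p q)

/-- The total differential `D̃ = δ₂ + (−1)^p d` of the augmentation double
complex. -/
def totD2 (δ₂V : ∀ p q, V p q →+ V (p + 1) q)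
    (dV : ∀ p q, V p q →+ V p (q + 1))
    (ω : ∀ p q, V p q) (p q : ℕ) : V p q :=
  tot2A δ₂V ω p q + ((-1 : ℤ) ^ p) • tot2B dV ω p q

/-- The extension of the augmentation `f* : V^{p,q} → K^{0,p,q}` to an embedding of
total complexes, placing `f*(ω)` in the `r = 0` layer. -/
def augEmb (f : ∀ p q, V p q →+ K 0 p q) (ω : ∀ p q, V p q) :
    ∀ r p q, K r p q
  | 0, p, q => f p q (ω p q)
  | (_ + 1), _, _ => 0

end
section Aux
variable {K : ℕ → ℕ → ℕ → Type*} [∀ r p q, AddCommGroup (K r p q)]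
variable (δ₁ : ∀ r p q, K r p q →+ K (r + 1) p q)
    (δ₂ : ∀ r p q, K r p q →+ K r (p + 1) q)
    (d : ∀ r p q, K r p q →+ K r p (q + 1))

lemma totD3_add (a b : ∀ r p q, K r p q) (r p q : ℕ) :
    totD3 δ₁ δ₂ d (fun r p q => a r p q + b r p q) r p q
      = totD3 δ₁ δ₂ d a r p q + totD3 δ₁ δ₂ d b r p q := by
  rcases r with _|r <;> rcases p with _|p <;> rcases q with _|q <;>
    simp [totD3, tot3A, tot3B, tot3C, smul_add] <;> abel

lemma totD3_sub (a b : ∀ r p q, K r p q) (r p q : ℕ) :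
    totD3 δ₁ δ₂ d (fun r p q => a r p q - b r p q) r p q
      = totD3 δ₁ δ₂ d a r p q - totD3 δ₁ δ₂ d b r p q := by
  rcases r with _|r <;> rcases p with _|p <;> rcases q with _|q <;>
    simp [totD3, tot3A, tot3B, tot3C, smul_sub] <;> abel

lemma totD3_sq
    (hδ₁ : ∀ r p q (x : K r p q), δ₁ (r + 1) p q (δ₁ r p q x) = 0)
    (hδ₂ : ∀ r p q (x : K r p q), δ₂ r (p + 1) q (δ₂ r p q x) = 0)
    (hd : ∀ r p q (x : K r p q), d r p (q + 1) (d r p q x) = 0)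
    (hc12 : ∀ r p q (x : K r p q), δ₁ r (p + 1) q (δ₂ r p q x) = δ₂ (r + 1) p q (δ₁ r p q x))
    (hc1d : ∀ r p q (x : K r p q), δ₁ r p (q + 1) (d r p q x) = d (r + 1) p q (δ₁ r p q x))
    (hc2d : ∀ r p q (x : K r p q), δ₂ r p (q + 1) (d r p q x) = d r (p + 1) q (δ₂ r p q x))
    (c : ∀ r p q, K r p q) (r p q : ℕ) :
    totD3 δ₁ δ₂ d (totD3 δ₁ δ₂ d c) r p q = 0 := by
  rcases r with _|_|r <;> rcases p with _|_|p <;> rcases q with _|_|q <;>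
    simp only [totD3, tot3A, tot3B, tot3C, map_add, map_zsmul, map_zero,
      hδ₁, hδ₂, hd, hc12, hc1d, hc2d, smul_zero, add_zero, zero_add, smul_add, smul_smul] <;>
    module
end Aux
section Aux2
variable {K : ℕ → ℕ → ℕ → Type*} [∀ r p q, AddCommGroup (K r p q)]
variable (δ₁ : ∀ r p q, K r p q →+ K (r + 1) p q)
    (δ₂ : ∀ r p q, K r p q →+ K r (p + 1) q)
    (d : ∀ r p q, K r p q →+ K r p (q + 1))

lemma descend
    (hδ₁ : ∀ r p q (x : K r p q), δ₁ (r + 1) p q (δ₁ r p q x) = 0)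
    (hδ₂ : ∀ r p q (x : K r p q), δ₂ r (p + 1) q (δ₂ r p q x) = 0)
    (hd : ∀ r p q (x : K r p q), d r p (q + 1) (d r p q x) = 0)
    (hc12 : ∀ r p q (x : K r p q), δ₁ r (p + 1) q (δ₂ r p q x) = δ₂ (r + 1) p q (δ₁ r p q x))
    (hc1d : ∀ r p q (x : K r p q), δ₁ r p (q + 1) (d r p q x) = d (r + 1) p q (δ₁ r p q x))
    (hc2d : ∀ r p q (x : K r p q), δ₂ r p (q + 1) (d r p q x) = d r (p + 1) q (δ₂ r p q x))
    (hexact : ∀ r p q (x : K (r + 1) p q), δ₁ (r + 1) p q x = 0 →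
      ∃ y : K r p q, δ₁ r p q y = x)
    (N : ℕ) :
    ∀ (m : ℕ) (c : ∀ r p q, K r p q),
    (∀ r p q, r + p + q ≠ N → c r p q = 0) →
    (∀ r p q, m < r → c r p q = 0) →
    (∀ r p q, totD3 δ₁ δ₂ d c (r + 1) p q = 0) →
    ∃ b : ∀ r p q, K r p q,
      (∀ r p q, r + p + q + 1 ≠ N → b r p q = 0) ∧
      (∀ r p q, c (r + 1) p q = totD3 δ₁ δ₂ d b (r + 1) p q) := by
  intro m
  induction m with
  | zero =>
    intro c hdeg hlev _
    refine ⟨fun _ _ _ => 0, fun _ _ _ _ => rfl, fun r p q => ?_⟩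
    rw [hlev (r + 1) p q (Nat.succ_pos r)]
    rcases p with _|p <;> rcases q with _|q <;> simp [totD3, tot3A, tot3B, tot3C]
  | succ m ih =>
    intro c hdeg hlev hD
    have hδtop : ∀ p q, δ₁ (m + 1) p q (c (m + 1) p q) = 0 := by
      intro p q
      have h := hD (m + 1) p q
      have h2 : ∀ p' q', c (m + 2) p' q' = 0 := fun p' q' => hlev _ _ _ (by omega)
      rcases p with _|p <;> rcases q with _|q <;>
        simpa [totD3, tot3A, tot3B, tot3C, h2] using h
    have hlift : ∀ p q, ∃ y : K m p q,
        δ₁ m p q y = c (m + 1) p q ∧ ((m + 1) + p + q ≠ N → y = 0) := by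
      intro p q
      by_cases hN : (m + 1) + p + q = N
      · obtain ⟨y, hy⟩ := hexact m p q _ (hδtop p q)
        exact ⟨y, hy, fun h => absurd hN h⟩
      · exact ⟨0, by simp [hdeg (m + 1) p q hN], fun _ => rfl⟩
    choose y hy1 hy2 using hlift
    set Y : ∀ r p q, K r p q :=
      fun r p q => if h : r = m then h.symm ▸ y p q else 0 with hYdef
    have hYm : ∀ p q, Y m p q = y p q := fun p q => dif_pos rfl
    have hYne : ∀ r p q, r ≠ m → Y r p q = 0 := fun r p q h => dif_neg h
    -- degree support of Y
    have hYdeg : ∀ r p q, r + p + q + 1 ≠ N → Y r p q = 0 := by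
      intro r p q h
      rcases eq_or_ne r m with rfl | hne
      · rw [hYm]; exact hy2 p q (by omega)
      · exact hYne r p q hne
    set c₁ : ∀ r p q, K r p q :=
      fun r p q => c r p q - totD3 δ₁ δ₂ d Y r p q with hc₁def
    have hDY0 : ∀ r p q, r + p + q ≠ N → totD3 δ₁ δ₂ d Y r p q = 0 := by
      intro r p q h
      have hA : tot3A δ₁ Y r p q = 0 := by
        rcases r with _|r
        · rfl
        · show δ₁ r p q (Y r p q) = 0
          rw [hYdeg r p q (by omega), map_zero]
      have hB : tot3B δ₂ Y r p q = 0 := by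
        rcases p with _|p
        · rfl
        · show δ₂ r p q (Y r p q) = 0
          rw [hYdeg r p q (by omega), map_zero]
      have hC : tot3C d Y r p q = 0 := by
        rcases q with _|q
        · rfl
        · show d r p q (Y r p q) = 0
          rw [hYdeg r p q (by omega), map_zero]
      rw [totD3, hA, hB, hC, smul_zero, smul_zero, add_zero, add_zero]
    have hdeg₁ : ∀ r p q, r + p + q ≠ N → c₁ r p q = 0 := by
      intro r p q h
      show c r p q - totD3 δ₁ δ₂ d Y r p q = 0
      rw [hdeg r p q h, hDY0 r p q h, sub_zero]
    have hlev₁ : ∀ r p q, m < r → c₁ r p q = 0 := by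
      intro r p q h
      show c r p q - totD3 δ₁ δ₂ d Y r p q = 0
      rcases Nat.lt_or_ge (m + 1) r with hr | hr
      · -- r ≥ m + 2
        have hA : tot3A δ₁ Y r p q = 0 := by
          rcases r with _|r
          · rfl
          · show δ₁ r p q (Y r p q) = 0
            rw [hYne r p q (by omega), map_zero]
        have hB : tot3B δ₂ Y r p q = 0 := by
          rcases p with _|p
          · rfl
          · show δ₂ r p q (Y r p q) = 0
            rw [hYne r p q (by omega), map_zero]
        have hC : tot3C d Y r p q = 0 := by
          rcases q with _|q
          · rfl
          · show d r p q (Y r p q) = 0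
            rw [hYne r p q (by omega), map_zero]
        rw [hlev r p q (by omega), totD3, hA, hB, hC, smul_zero, smul_zero,
          add_zero, add_zero, sub_zero]
      · -- r = m + 1
        have hrm : r = m + 1 := by omega
        subst hrm
        have hA : tot3A δ₁ Y (m + 1) p q = c (m + 1) p q := by
          show δ₁ m p q (Y m p q) = _
          rw [hYm, hy1]
        have hB : tot3B δ₂ Y (m + 1) p q = 0 := by
          rcases p with _|p
          · rfl
          · show δ₂ (m + 1) p q (Y (m + 1) p q) = 0
            rw [hYne (m + 1) p q (by omega), map_zero]
        have hC : tot3C d Y (m + 1) p q = 0 := by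
          rcases q with _|q
          · rfl
          · show d (m + 1) p q (Y (m + 1) p q) = 0
            rw [hYne (m + 1) p q (by omega), map_zero]
        rw [totD3, hA, hB, hC, smul_zero, smul_zero, add_zero, add_zero, sub_self]
    have hD₁ : ∀ r p q, totD3 δ₁ δ₂ d c₁ (r + 1) p q = 0 := by
      intro r p q
      have := totD3_sub δ₁ δ₂ d c (totD3 δ₁ δ₂ d Y) (r + 1) p q
      show totD3 δ₁ δ₂ d (fun r p q => c r p q - totD3 δ₁ δ₂ d Y r p q) (r + 1) p q = 0
      rw [this, hD r p q, totD3_sq δ₁ δ₂ d hδ₁ hδ₂ hd hc12 hc1d hc2d Y,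
        sub_zero]
    obtain ⟨b₁, hb₁deg, hb₁⟩ := ih c₁ hdeg₁ hlev₁ hD₁
    refine ⟨fun r p q => Y r p q + b₁ r p q, ?_, ?_⟩
    · intro r p q h
      show Y r p q + b₁ r p q = 0
      rw [hYdeg r p q h, hb₁deg r p q h, add_zero]
    · intro r p q
      rw [totD3_add δ₁ δ₂ d Y b₁ (r + 1) p q, ← hb₁ r p q]
      show c (r + 1) p q = _ + (c (r + 1) p q - totD3 δ₁ δ₂ d Y (r + 1) p q)
      abel
end Aux2
section Aux3
variable {K : ℕ → ℕ → ℕ → Type*} [∀ r p q, AddCommGroup (K r p q)]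
variable {V : ℕ → ℕ → Type*} [∀ p q, AddCommGroup (V p q)]
variable (δ₁ : ∀ r p q, K r p q →+ K (r + 1) p q)
    (δ₂ : ∀ r p q, K r p q →+ K r (p + 1) q)
    (d : ∀ r p q, K r p q →+ K r p (q + 1))

lemma totD3_deg_support (N : ℕ) (b : ∀ r p q, K r p q)
    (hb : ∀ r p q, r + p + q + 1 ≠ N → b r p q = 0) (r p q : ℕ)
    (h : r + p + q ≠ N) : totD3 δ₁ δ₂ d b r p q = 0 := by
  have hA : tot3A δ₁ b r p q = 0 := by
    rcases r with _|r
    · rfl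
    · show δ₁ r p q (b r p q) = 0
      rw [hb r p q (by omega), map_zero]
  have hB : tot3B δ₂ b r p q = 0 := by
    rcases p with _|p
    · rfl
    · show δ₂ r p q (b r p q) = 0
      rw [hb r p q (by omega), map_zero]
  have hC : tot3C d b r p q = 0 := by
    rcases q with _|q
    · rfl
    · show d r p q (b r p q) = 0
      rw [hb r p q (by omega), map_zero]
  rw [totD3, hA, hB, hC, smul_zero, smul_zero, add_zero, add_zero]

lemma totD3_one (e : ∀ r p q, K r p q) (he : ∀ p q, e 1 p q = 0) (p q : ℕ) :
    totD3 δ₁ δ₂ d e 1 p q = δ₁ 0 p q (e 0 p q) := by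
  rcases p with _|p <;> rcases q with _|q <;>
    simp [totD3, tot3A, tot3B, tot3C, he]

lemma aug_compat (δ₂V : ∀ p q, V p q →+ V (p + 1) q)
    (dV : ∀ p q, V p q →+ V p (q + 1)) (f : ∀ p q, V p q →+ K 0 p q)
    (hf2 : ∀ p q (v : V p q), f (p + 1) q (δ₂V p q v) = δ₂ 0 p q (f p q v))
    (hfd : ∀ p q (v : V p q), f p (q + 1) (dV p q v) = d 0 p q (f p q v))
    (e : ∀ r p q, K r p q) (ω : ∀ p q, V p q)
    (he0 : ∀ p q, f p q (ω p q) = e 0 p q) (p q : ℕ) :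
    f p q (totD2 δ₂V dV ω p q) = totD3 δ₁ δ₂ d e 0 p q := by
  rcases p with _|p <;> rcases q with _|q <;>
    simp [totD2, totD3, tot3A, tot3B, tot3C, tot2A, tot2B, map_zsmul,
      hf2, hfd, he0]
end Aux3
/-- under the hypotheses of the augmented triple complex lemma
(exact rows in the `δ₁`-direction), the augmentation `f* : Tot(V) → Tot(K)` is a
quasi-isomorphism of total complexes: it is both surjective and injective on
total cohomology. -/
theorem augmentation_quasi_isomorphism
    {K : ℕ → ℕ → ℕ → Type*} [∀ r p q, AddCommGroup (K r p q)]
    {V : ℕ → ℕ → Type*} [∀ p q, AddCommGroup (V p q)]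
    (δ₁ : ∀ r p q, K r p q →+ K (r + 1) p q)
    (δ₂ : ∀ r p q, K r p q →+ K r (p + 1) q)
    (d : ∀ r p q, K r p q →+ K r p (q + 1))
    (δ₂V : ∀ p q, V p q →+ V (p + 1) q)
    (dV : ∀ p q, V p q →+ V p (q + 1))
    (f : ∀ p q, V p q →+ K 0 p q)
    (hδ₁ : ∀ r p q (x : K r p q), δ₁ (r + 1) p q (δ₁ r p q x) = 0)
    (hδ₂ : ∀ r p q (x : K r p q), δ₂ r (p + 1) q (δ₂ r p q x) = 0)
    (hd : ∀ r p q (x : K r p q), d r p (q + 1) (d r p q x) = 0)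
    (hc12 : ∀ r p q (x : K r p q), δ₁ r (p + 1) q (δ₂ r p q x) = δ₂ (r + 1) p q (δ₁ r p q x))
    (hc1d : ∀ r p q (x : K r p q), δ₁ r p (q + 1) (d r p q x) = d (r + 1) p q (δ₁ r p q x))
    (hc2d : ∀ r p q (x : K r p q), δ₂ r p (q + 1) (d r p q x) = d r (p + 1) q (δ₂ r p q x))
    (hδ₂V : ∀ p q (v : V p q), δ₂V (p + 1) q (δ₂V p q v) = 0)
    (hdV : ∀ p q (v : V p q), dV p (q + 1) (dV p q v) = 0)
    (hcV : ∀ p q (v : V p q), δ₂V p (q + 1) (dV p q v) = dV (p + 1) q (δ₂V p q v))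
    (hf_inj : ∀ p q, Function.Injective (f p q))
    (hf2 : ∀ p q (v : V p q), f (p + 1) q (δ₂V p q v) = δ₂ 0 p q (f p q v))
    (hfd : ∀ p q (v : V p q), f p (q + 1) (dV p q v) = d 0 p q (f p q v))
    (hexact0 : ∀ p q (x : K 0 p q), δ₁ 0 p q x = 0 → ∃ v : V p q, f p q v = x)
    (hexact : ∀ r p q (x : K (r + 1) p q), δ₁ (r + 1) p q x = 0 →
      ∃ y : K r p q, δ₁ r p q y = x) :
    -- surjectivity on total cohomology:
    (∀ (n : ℕ) (c : ∀ r p q, K r p q),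
      (∀ r p q, r + p + q ≠ n → c r p q = 0) →
      (∀ r p q, totD3 δ₁ δ₂ d c r p q = 0) →
      ∃ (ω : ∀ p q, V p q) (b : ∀ r p q, K r p q),
        (∀ p q, p + q ≠ n → ω p q = 0) ∧
        (∀ p q, totD2 δ₂V dV ω p q = 0) ∧
        (∀ r p q, r + p + q + 1 ≠ n → b r p q = 0) ∧
        (∀ r p q, c r p q = augEmb f ω r p q + totD3 δ₁ δ₂ d b r p q)) ∧
    -- injectivity on total cohomology:
    (∀ (n : ℕ) (ω : ∀ p q, V p q),
      (∀ p q, p + q ≠ n → ω p q = 0) →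
      (∀ p q, totD2 δ₂V dV ω p q = 0) →
      (∃ φ : ∀ r p q, K r p q,
        (∀ r p q, r + p + q + 1 ≠ n → φ r p q = 0) ∧
        (∀ r p q, augEmb f ω r p q = totD3 δ₁ δ₂ d φ r p q)) →
      ∃ ω' : ∀ p q, V p q,
        (∀ p q, p + q + 1 ≠ n → ω' p q = 0) ∧
        (∀ p q, ω p q = totD2 δ₂V dV ω' p q)) := by
  have hfinj0 : ∀ p q (v : V p q), f p q v = 0 → v = 0 := by
    intro p q v h
    exact hf_inj p q (by simpa using h)
  constructor
  · -- surjectivity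
    intro n c hdeg hD
    obtain ⟨b, hbdeg, hb⟩ := descend δ₁ δ₂ d hδ₁ hδ₂ hd hc12 hc1d hc2d hexact n n c hdeg
      (fun r p q h => hdeg r p q (by omega)) (fun r p q => hD (r + 1) p q)
    set e : ∀ r p q, K r p q := fun r p q => c r p q - totD3 δ₁ δ₂ d b r p q with he_def
    have he1 : ∀ r p q, e (r + 1) p q = 0 := by
      intro r p q
      show c (r + 1) p q - _ = 0
      rw [hb r p q, sub_self]
    have hDe : ∀ r p q, totD3 δ₁ δ₂ d e r p q = 0 := by
      intro r p q
      show totD3 δ₁ δ₂ d (fun r p q => c r p q - totD3 δ₁ δ₂ d b r p q) r p q = 0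
      rw [totD3_sub, hD, totD3_sq δ₁ δ₂ d hδ₁ hδ₂ hd hc12 hc1d hc2d, sub_zero]
    have hδe : ∀ p q, δ₁ 0 p q (e 0 p q) = 0 := by
      intro p q
      have h := hDe 1 p q
      rwa [totD3_one δ₁ δ₂ d e (fun p q => he1 0 p q) p q] at h
    choose ω hω using fun p q => hexact0 p q (e 0 p q) (hδe p q)
    have he0supp : ∀ p q, p + q ≠ n → e 0 p q = 0 := by
      intro p q h
      show c 0 p q - _ = 0
      rw [hdeg 0 p q (by omega), totD3_deg_support δ₁ δ₂ d n b hbdeg 0 p q (by omega),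
        sub_zero]
    refine ⟨ω, b, ?_, ?_, hbdeg, ?_⟩
    · intro p q h
      exact hfinj0 p q _ (by rw [hω p q]; exact he0supp p q h)
    · intro p q
      apply hfinj0 p q
      rw [aug_compat δ₁ δ₂ d δ₂V dV f hf2 hfd e ω hω p q]
      exact hDe 0 p q
    · intro r p q
      rcases r with _|r
      · show c 0 p q = f p q (ω p q) + totD3 δ₁ δ₂ d b 0 p q
        rw [hω p q]
        show c 0 p q = (c 0 p q - totD3 δ₁ δ₂ d b 0 p q) + totD3 δ₁ δ₂ d b 0 p q
        abel
      · show c (r + 1) p q = 0 + totD3 δ₁ δ₂ d b (r + 1) p q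
        rw [zero_add]
        exact hb r p q
  · -- injectivity
    rintro n ω hωdeg hωD ⟨φ, hφdeg, hφ⟩
    rcases n with _|N
    · refine ⟨fun _ _ => 0, fun _ _ _ => rfl, ?_⟩
      intro p q
      have hφ0 : ∀ r p q, φ r p q = 0 := fun r p q => hφdeg r p q (by omega)
      have hω0 : f p q (ω p q) = 0 := by
        have h := hφ 0 p q
        rcases p with _|p <;> rcases q with _|q <;>
          simpa [totD3, tot3A, tot3B, tot3C, hφ0, augEmb] using h
      have : ω p q = 0 := hfinj0 p q _ hω0
      rw [this]
      rcases p with _|p <;> rcases q with _|q <;>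
        simp [totD2, tot2A, tot2B]
    · obtain ⟨ψ, hψdeg, hψ⟩ := descend δ₁ δ₂ d hδ₁ hδ₂ hd hc12 hc1d hc2d hexact N N φ
        (fun r p q h => hφdeg r p q (by omega))
        (fun r p q h => hφdeg r p q (by omega))
        (fun r p q => (hφ (r + 1) p q).symm)
      set e : ∀ r p q, K r p q := fun r p q => φ r p q - totD3 δ₁ δ₂ d ψ r p q with he_def
      have he1 : ∀ r p q, e (r + 1) p q = 0 := by
        intro r p q
        show φ (r + 1) p q - _ = 0
        rw [hψ r p q, sub_self]
      have hDe : ∀ r p q, totD3 δ₁ δ₂ d e r p q = augEmb f ω r p q := by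
        intro r p q
        show totD3 δ₁ δ₂ d (fun r p q => φ r p q - totD3 δ₁ δ₂ d ψ r p q) r p q = _
        rw [totD3_sub, totD3_sq δ₁ δ₂ d hδ₁ hδ₂ hd hc12 hc1d hc2d, sub_zero,
          ← hφ r p q]
      have hδe : ∀ p q, δ₁ 0 p q (e 0 p q) = 0 := by
        intro p q
        have h := hDe 1 p q
        rwa [totD3_one δ₁ δ₂ d e (fun p q => he1 0 p q) p q] at h
      choose ω' hω' using fun p q => hexact0 p q (e 0 p q) (hδe p q)
      refine ⟨ω', ?_, ?_⟩
      · intro p q h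
        apply hfinj0 p q
        rw [hω' p q]
        show φ 0 p q - _ = 0
        rw [hφdeg 0 p q (by omega),
          totD3_deg_support δ₁ δ₂ d N ψ hψdeg 0 p q (by omega), sub_zero]
      · intro p q
        apply hf_inj p q
        rw [aug_compat δ₁ δ₂ d δ₂V dV f hf2 hfd e ω' hω' p q]
        exact (hDe 0 p q).symm
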